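/- Let F ∈ ℝ^{3×3} have proper singular value decomposition F = USVᵀ, and let p(R̃) = exp(tr(FᵀR̃))/c(F) be the matrix Fisher density on SO(3). Then the minimum mean square error mean attitude is R = UVᵀ; that is, for every R ∈ SO(3), ∫_{SO(3)} ‖UVᵀ − R̃‖_F² p(R̃) dR̃ ≤ ∫_{SO(3)} ‖R − R̃‖_F² p(R̃) dR̃, where ‖A‖_F = √(tr(AᵀA)) denotes the Frobenius norm. -/

import Mathlib

open MeasureTheory Matrix Real

noncomputable section

/-- The space of real 3×3 matrices. -/
abbrev M3 : Type := Matrix (Fin 3) (Fin 3) ℝ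

instance : MeasurableSpace M3 := inferInstanceAs (MeasurableSpace (Fin 3 → Fin 3 → ℝ))

/-- The special orthogonal group SO(3), as a set of real 3×3 matrices. -/
def SO3 : Set M3 := {R | Rᵀ * R = 1 ∧ R.det = 1}

/-- The normalizing constant of the matrix Fisher distribution,
`c(F) = ∫_{SO(3)} exp(tr(Fᵀ R)) dR`. -/
noncomputable def mfC (μ : Measure M3) (F : M3) : ℝ :=
  ∫ R, Real.exp (Fᵀ * R).trace ∂μ

/-- The squared Frobenius norm, `‖A‖_F² = tr(Aᵀ A)`. -/
noncomputable def frobSq (A : M3) : ℝ := (Aᵀ * A).trace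

namespace MFAux

instance : BorelSpace M3 := inferInstanceAs (BorelSpace (Fin 3 → Fin 3 → ℝ))

/-! ### Algebraic facts about SO(3) -/

lemma so3_mul {A B : M3} (hA : A ∈ SO3) (hB : B ∈ SO3) : A * B ∈ SO3 := by
  constructor
  · rw [transpose_mul]
    calc Bᵀ * Aᵀ * (A * B) = Bᵀ * (Aᵀ * A) * B := by
          rw [Matrix.mul_assoc, Matrix.mul_assoc, Matrix.mul_assoc]
    _ = 1 := by rw [hA.1, Matrix.mul_one, hB.1]
  · rw [det_mul, hA.2, hB.2, mul_one]

lemma so3_mul_transpose_self {A : M3} (hA : A ∈ SO3) : A * Aᵀ = 1 :=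
  mul_eq_one_comm.mp hA.1

lemma so3_transpose {A : M3} (hA : A ∈ SO3) : Aᵀ ∈ SO3 := by
  refine ⟨?_, by rw [det_transpose, hA.2]⟩
  rw [transpose_transpose]
  exact so3_mul_transpose_self hA

lemma so3_one : (1 : M3) ∈ SO3 := ⟨by simp, by simp⟩

lemma so3_entry_sq_le {R : M3} (hR : R ∈ SO3) (i j : Fin 3) : R i j ^ 2 ≤ 1 := by
  have h := congrFun (congrFun hR.1 j) j
  simp only [Matrix.mul_apply, Matrix.transpose_apply, Matrix.one_apply_eq] at h
  have h2 : R i j * R i j ≤ ∑ k, R k j * R k j :=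
    Finset.single_le_sum (f := fun k => R k j * R k j)
      (fun k _ => mul_self_nonneg _) (Finset.mem_univ i)
  rw [h] at h2
  nlinarith

lemma so3_entry_abs_le {R : M3} (hR : R ∈ SO3) (i j : Fin 3) : |R i j| ≤ 1 := by
  have := so3_entry_sq_le hR i j
  nlinarith [abs_nonneg (R i j), sq_abs (R i j)]

lemma so3_trace_ge {Q : M3} (hQ : Q ∈ SO3) : -1 ≤ Q.trace := by
  by_contra hcon
  push_neg at hcon
  set t := Q.trace with ht
  have hdisc : 0 ≤ (t - 1) ^ 2 - 4 := by nlinarith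
  set s := Real.sqrt ((t - 1) ^ 2 - 4) with hs
  have hs2 : s ^ 2 = (t - 1) ^ 2 - 4 := Real.sq_sqrt hdisc
  set x := (t - 1 - s) / 2 with hx
  have hroot : x ^ 2 - (t - 1) * x + 1 = 0 := by
    rw [hx]; linear_combination hs2 / 4
  have hadj : Q.adjugate = Qᵀ := by
    calc Q.adjugate = (Qᵀ * Q) * Q.adjugate := by rw [hQ.1, Matrix.one_mul]
    _ = Qᵀ * (Q * Q.adjugate) := by rw [Matrix.mul_assoc]
    _ = Qᵀ := by rw [Matrix.mul_adjugate, hQ.2, one_smul, Matrix.mul_one]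
  have hadj3 := Matrix.adjugate_fin_three Q
  rw [hadj] at hadj3
  have c0 : Q 0 0 = Q 1 1 * Q 2 2 - Q 1 2 * Q 2 1 := by
    have := congrFun (congrFun hadj3 0) 0; simpa using this
  have c1 : Q 1 1 = Q 0 0 * Q 2 2 - Q 0 2 * Q 2 0 := by
    have := congrFun (congrFun hadj3 1) 1; simpa using this
  have c2 : Q 2 2 = Q 0 0 * Q 1 1 - Q 0 1 * Q 1 0 := by
    have := congrFun (congrFun hadj3 2) 2; simpa using this
  have hdet : Q.det = 1 := hQ.2
  rw [Matrix.det_fin_three] at hdet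
  have htr : t = Q 0 0 + Q 1 1 + Q 2 2 := by rw [ht, Matrix.trace_fin_three]
  have hdetpoly : (x • (1 : M3) - Q).det = x^3 - t*x^2 + t*x - 1 := by
    rw [Matrix.det_fin_three]
    simp only [Matrix.sub_apply, Matrix.smul_apply, Matrix.one_apply, smul_eq_mul,
      Fin.ext_iff]
    norm_num
    linear_combination (x^2 - x) * htr - x * c0 - x * c1 - x * c2 - hdet
  have hdet0 : (x • (1 : M3) - Q).det = 0 := by
    rw [hdetpoly]; linear_combination (x - 1) * hroot
  obtain ⟨v, hv0, hv⟩ := Matrix.exists_mulVec_eq_zero_iff.mpr hdet0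
  have hQv : Q *ᵥ v = x • v := by
    rw [Matrix.sub_mulVec, Matrix.smul_mulVec, Matrix.one_mulVec, sub_eq_zero] at hv
    exact hv.symm
  have hnorm : (Q *ᵥ v) ⬝ᵥ (Q *ᵥ v) = v ⬝ᵥ v := by
    rw [dotProduct_mulVec, ← Matrix.mulVec_transpose, Matrix.mulVec_mulVec, hQ.1,
      Matrix.one_mulVec]
  rw [hQv] at hnorm
  have hvv : 0 < v ⬝ᵥ v := by
    have hnn : (0:ℝ) ≤ v ⬝ᵥ v := Finset.sum_nonneg fun i _ => mul_self_nonneg _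
    rcases lt_or_eq_of_le hnn with h | h
    · exact h
    · exact absurd (dotProduct_self_eq_zero.mp h.symm) hv0
  have hx2 : x ^ 2 = 1 := by
    have h2 : (x ^ 2) * (v ⬝ᵥ v) = v ⬝ᵥ v := by
      calc (x ^ 2) * (v ⬝ᵥ v) = (x • v) ⬝ᵥ (x • v) := by
            rw [smul_dotProduct, dotProduct_smul, smul_eq_mul, smul_eq_mul]; ring
      _ = v ⬝ᵥ v := hnorm
    nlinarith
  have hcase : (x - 1) * (x + 1) = 0 := by linear_combination hx2
  rcases mul_eq_zero.mp hcase with h | h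
  · have : x = 1 := by linarith
    rw [this] at hroot; linarith
  · have : x = -1 := by linarith
    rw [this] at hroot; linarith

/-! ### Continuity and trace helpers -/

lemma cont_entry (i j : Fin 3) : Continuous fun R : M3 => R i j :=
  ((continuous_apply j).comp (continuous_apply i) : _)

lemma cont_trace : Continuous fun R : M3 => R.trace :=
  continuous_id.matrix_trace (R := ℝ)

lemma cont_mul_left_right (A B : M3) : Continuous fun R : M3 => A * R * B :=
  (continuous_const.matrix_mul continuous_id).matrix_mul continuous_const

lemma cont_trace_mul (A : M3) : Continuous fun R : M3 => (A * R).trace :=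
  (continuous_const.matrix_mul continuous_id).matrix_trace

lemma cont_w (d : Fin 3 → ℝ) : Continuous fun R : M3 => Real.exp ((Matrix.diagonal d * R).trace) :=
  Real.continuous_exp.comp (cont_trace_mul _)

lemma diag_trace (d : Fin 3 → ℝ) (R : M3) :
    (Matrix.diagonal d * R).trace = d 0 * R 0 0 + d 1 * R 1 1 + d 2 * R 2 2 := by
  rw [Matrix.trace_fin_three]
  simp [Matrix.diagonal_mul]

lemma trace_transpose_mul_eq (G : M3) (R : M3) :
    (Gᵀ * R).trace = ∑ j, ∑ i, G i j * R i j := by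
  rw [Matrix.trace]
  simp [Matrix.diag, Matrix.mul_apply, Matrix.transpose_apply]

lemma trace_abs_le (G : M3) {R : M3} (hR : R ∈ SO3) :
    |(Gᵀ * R).trace| ≤ ∑ i, ∑ j, |G i j| := by
  rw [trace_transpose_mul_eq]
  calc |∑ j, ∑ i, G i j * R i j| ≤ ∑ j, ∑ i, |G i j * R i j| := by
        refine (Finset.abs_sum_le_sum_abs _ _).trans ?_
        exact Finset.sum_le_sum fun j _ => Finset.abs_sum_le_sum_abs _ _
  _ ≤ ∑ j, ∑ i, |G i j| := by
        refine Finset.sum_le_sum fun j _ => Finset.sum_le_sum fun i _ => ?_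
        rw [abs_mul]
        exact mul_le_of_le_one_right (abs_nonneg _) (so3_entry_abs_le hR i j)
  _ = ∑ i, ∑ j, |G i j| := Finset.sum_comm

lemma exp_trace_le (G : M3) {R : M3} (hR : R ∈ SO3) :
    Real.exp ((Gᵀ * R).trace) ≤ Real.exp (∑ i, ∑ j, |G i j|) :=
  Real.exp_le_exp.mpr ((le_abs_self _).trans (trace_abs_le G hR))

/-! ### Measure-theoretic infrastructure -/

section Meas
set_option linter.unusedSectionVars false

variable {μ : Measure M3} [IsProbabilityMeasure μ]

lemma ae_so3 (hsupp : μ SO3ᶜ = 0) : ∀ᵐ R ∂μ, R ∈ SO3 := by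
  rw [MeasureTheory.ae_iff]
  exact hsupp

lemma integrable_bdd (hsupp : μ SO3ᶜ = 0) {f : M3 → ℝ} (hf : Continuous f) {C : ℝ}
    (hC : ∀ R ∈ SO3, |f R| ≤ C) : Integrable f μ :=
  (integrable_const C).mono' hf.aestronglyMeasurable
    ((ae_so3 hsupp).mono fun R hR => by rw [Real.norm_eq_abs]; exact hC R hR)

lemma map_conj (hleft : ∀ Q ∈ SO3, μ.map (fun R => Q * R) = μ)
    (hright : ∀ Q ∈ SO3, μ.map (fun R => R * Q) = μ)
    {A B : M3} (hA : A ∈ SO3) (hB : B ∈ SO3) :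
    μ.map (fun R => A * R * B) = μ := by
  have hmA : Measurable fun R : M3 => A * R :=
    (continuous_const.matrix_mul continuous_id).measurable
  have hmB : Measurable fun R : M3 => R * B :=
    (continuous_id.matrix_mul continuous_const).measurable
  have hcomp : (fun R : M3 => A * R * B) = (fun R : M3 => R * B) ∘ (fun R : M3 => A * R) := rfl
  rw [hcomp, ← Measure.map_map hmB hmA, hleft A hA, hright B hB]

lemma integral_conj (hleft : ∀ Q ∈ SO3, μ.map (fun R => Q * R) = μ)
    (hright : ∀ Q ∈ SO3, μ.map (fun R => R * Q) = μ)
    {A B : M3} (hA : A ∈ SO3) (hB : B ∈ SO3) {f : M3 → ℝ} (hf : Continuous f) :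
    ∫ R, f R ∂μ = ∫ R, f (A * R * B) ∂μ := by
  have hmap := map_conj hleft hright hA hB
  have hm : Measurable fun R : M3 => A * R * B := (cont_mul_left_right A B).measurable
  calc ∫ R, f R ∂μ = ∫ R, f R ∂(μ.map (fun R => A * R * B)) := by rw [hmap]
  _ = ∫ R, f (A * R * B) ∂μ := by
      rw [MeasureTheory.integral_map hm.aemeasurable]
      rw [hmap]; exact hf.aestronglyMeasurable

lemma integrable_tw (hsupp : μ SO3ᶜ = 0) (A : M3) (d : Fin 3 → ℝ) :
    Integrable (fun R => (Aᵀ * R).trace * Real.exp ((Matrix.diagonal d * R).trace)) μ := by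
  refine integrable_bdd hsupp (((continuous_const.matrix_mul continuous_id).matrix_trace).mul
    (cont_w d)) (C := (∑ i, ∑ j, |A i j|) * Real.exp (∑ i, ∑ j, |(Matrix.diagonal d) i j|))
    fun R hR => ?_
  rw [abs_mul, Real.abs_exp]
  refine mul_le_mul (trace_abs_le A hR) ?_ (Real.exp_pos _).le
    (Finset.sum_nonneg fun i _ => Finset.sum_nonneg fun j _ => abs_nonneg _)
  have : (Matrix.diagonal d * R).trace = ((Matrix.diagonal d)ᵀ * R).trace := by
    rw [Matrix.diagonal_transpose]
  rw [this]
  exact exp_trace_le _ hR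

end Meas

/-! ### The scalar symmetrization inequality -/

lemma scalar_pair (a b c x y z : ℝ) (hab : 0 ≤ a + b) :
    0 ≤ (x + y) * Real.exp (a*x + b*y + c*z) + (x + y) * Real.exp (b*x + a*y + c*z)
      - (x + y) * Real.exp (-a*x + -b*y + c*z) - (x + y) * Real.exp (-b*x + -a*y + c*z) := by
  rw [show -a*x + -b*y + c*z = (-(a*x + b*y)) + c*z from by ring,
      show -b*x + -a*y + c*z = (-(b*x + a*y)) + c*z from by ring,
      Real.exp_add (a*x + b*y) (c*z), Real.exp_add (b*x + a*y) (c*z),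
      Real.exp_add (-(a*x + b*y)) (c*z), Real.exp_add (-(b*x + a*y)) (c*z)]
  set u := a*x + b*y with hu
  set v := b*x + a*y with hv
  have hE : (0:ℝ) ≤ Real.exp (c*z) := (Real.exp_pos _).le
  have hfact : (x + y) * (Real.exp u * Real.exp (c*z)) + (x + y) * (Real.exp v * Real.exp (c*z))
      - (x + y) * (Real.exp (-u) * Real.exp (c*z)) - (x + y) * (Real.exp (-v) * Real.exp (c*z))
      = ((x + y) * (Real.exp u + Real.exp v - Real.exp (-u) - Real.exp (-v))) * Real.exp (c*z) := by
    ring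
  rw [hfact]
  refine mul_nonneg ?_ hE
  rcases le_total 0 (x + y) with h | h
  · have huv : 0 ≤ u + v := by rw [hu, hv]; nlinarith
    have h1 : Real.exp (-u) ≤ Real.exp v := Real.exp_le_exp.mpr (by linarith)
    have h2 : Real.exp (-v) ≤ Real.exp u := Real.exp_le_exp.mpr (by linarith)
    exact mul_nonneg h (by linarith)
  · have huv : u + v ≤ 0 := by rw [hu, hv]; nlinarith
    have h1 : Real.exp v ≤ Real.exp (-u) := Real.exp_le_exp.mpr (by linarith)
    have h2 : Real.exp u ≤ Real.exp (-v) := Real.exp_le_exp.mpr (by linarith)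
    exact mul_nonneg_of_nonpos_of_nonpos h (by linarith : Real.exp u + Real.exp v - Real.exp (-u) - Real.exp (-v) ≤ 0)

end MFAux

namespace MFAux

/-! ### Explicit symmetry matrices -/

noncomputable def DD1 : M3 := Matrix.diagonal ![1, -1, -1]
noncomputable def DD2 : M3 := Matrix.diagonal ![-1, 1, -1]
noncomputable def DD3 : M3 := Matrix.diagonal ![-1, -1, 1]
noncomputable def PP01 : M3 := !![0,1,0; 1,0,0; 0,0,-1]
noncomputable def PP02 : M3 := !![0,0,1; 0,-1,0; 1,0,0]
noncomputable def PP12 : M3 := !![-1,0,0; 0,0,1; 0,1,0]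

lemma DD1_mem : DD1 ∈ SO3 := by
  constructor
  · rw [DD1, Matrix.diagonal_transpose, Matrix.diagonal_mul_diagonal]
    ext i j
    fin_cases i <;> fin_cases j <;> simp [Matrix.diagonal, Matrix.one_apply] <;> norm_num
  · rw [DD1]; norm_num [Matrix.det_diagonal, Fin.prod_univ_three, Matrix.cons_val_two]

lemma DD2_mem : DD2 ∈ SO3 := by
  constructor
  · rw [DD2, Matrix.diagonal_transpose, Matrix.diagonal_mul_diagonal]
    ext i j
    fin_cases i <;> fin_cases j <;> simp [Matrix.diagonal, Matrix.one_apply] <;> norm_num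
  · rw [DD2]; norm_num [Matrix.det_diagonal, Fin.prod_univ_three, Matrix.cons_val_two]

lemma DD3_mem : DD3 ∈ SO3 := by
  constructor
  · rw [DD3, Matrix.diagonal_transpose, Matrix.diagonal_mul_diagonal]
    ext i j
    fin_cases i <;> fin_cases j <;> simp [Matrix.diagonal, Matrix.one_apply] <;> norm_num
  · rw [DD3]; norm_num [Matrix.det_diagonal, Fin.prod_univ_three, Matrix.cons_val_two]

lemma PP01_mem : PP01 ∈ SO3 := by
  constructor
  · ext i j
    fin_cases i <;> fin_cases j <;>
      simp [PP01, Matrix.mul_apply, Matrix.transpose_apply, Fin.sum_univ_three, Matrix.one_apply, Matrix.vecHead, Matrix.vecTail] <;> norm_num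
  · norm_num [PP01, Matrix.det_fin_three, Matrix.cons_val_two, Matrix.vecHead, Matrix.vecTail]

lemma PP02_mem : PP02 ∈ SO3 := by
  constructor
  · ext i j
    fin_cases i <;> fin_cases j <;>
      simp [PP02, Matrix.mul_apply, Matrix.transpose_apply, Fin.sum_univ_three, Matrix.one_apply, Matrix.vecHead, Matrix.vecTail] <;> norm_num
  · norm_num [PP02, Matrix.det_fin_three, Matrix.cons_val_two, Matrix.vecHead, Matrix.vecTail]

lemma PP12_mem : PP12 ∈ SO3 := by
  constructor
  · ext i j
    fin_cases i <;> fin_cases j <;>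
      simp [PP12, Matrix.mul_apply, Matrix.transpose_apply, Fin.sum_univ_three, Matrix.one_apply, Matrix.vecHead, Matrix.vecTail] <;> norm_num
  · norm_num [PP12, Matrix.det_fin_three, Matrix.cons_val_two, Matrix.vecHead, Matrix.vecTail]

section Key

set_option linter.unusedSectionVars false

variable {μ : Measure M3} [IsProbabilityMeasure μ]

/-- weight function -/
noncomputable def W (d : Fin 3 → ℝ) (R : M3) : ℝ := Real.exp ((Matrix.diagonal d * R).trace)

lemma cont_W (d : Fin 3 → ℝ) : Continuous (W d) := cont_w d

lemma integrable_pw (hsupp : μ SO3ᶜ = 0) (i j : Fin 3) (d : Fin 3 → ℝ) :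
    Integrable (fun R => (R i i + R j j) * W d R) μ := by
  refine integrable_bdd hsupp (((cont_entry i i).add (cont_entry j j)).mul (cont_W d))
    (C := 2 * Real.exp (|d 0| + |d 1| + |d 2|)) fun R hR => ?_
  rw [abs_mul]
  refine mul_le_mul ?_ ?_ (abs_nonneg _) (by norm_num)
  · calc |R i i + R j j| ≤ |R i i| + |R j j| := abs_add_le _ _
    _ ≤ 2 := by linarith [so3_entry_abs_le hR i i, so3_entry_abs_le hR j j]
  · simp only [W]
    rw [Real.abs_exp, Real.exp_le_exp, diag_trace]
    have h0 := so3_entry_abs_le hR 0 0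
    have h1 := so3_entry_abs_le hR 1 1
    have h2 := so3_entry_abs_le hR 2 2
    have b0 : d 0 * R 0 0 ≤ |d 0| := by
      calc d 0 * R 0 0 ≤ |d 0 * R 0 0| := le_abs_self _
      _ = |d 0| * |R 0 0| := abs_mul _ _
      _ ≤ |d 0| := mul_le_of_le_one_right (abs_nonneg _) h0
    have b1 : d 1 * R 1 1 ≤ |d 1| := by
      calc d 1 * R 1 1 ≤ |d 1 * R 1 1| := le_abs_self _
      _ = |d 1| * |R 1 1| := abs_mul _ _
      _ ≤ |d 1| := mul_le_of_le_one_right (abs_nonneg _) h1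
    have b2 : d 2 * R 2 2 ≤ |d 2| := by
      calc d 2 * R 2 2 ≤ |d 2 * R 2 2| := le_abs_self _
      _ = |d 2| * |R 2 2| := abs_mul _ _
      _ ≤ |d 2| := mul_le_of_le_one_right (abs_nonneg _) h2
    linarith

lemma integrable_ew (hsupp : μ SO3ᶜ = 0) (i : Fin 3) (d : Fin 3 → ℝ) :
    Integrable (fun R => R i i * W d R) μ := by
  have h := integrable_pw hsupp i i d
  have h2 : Integrable (fun R => (2:ℝ)⁻¹ * ((R i i + R i i) * W d R)) μ := h.const_mul _
  refine h2.congr (Filter.Eventually.of_forall fun R => ?_)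
  ring

lemma integrable_tw' (hsupp : μ SO3ᶜ = 0) (A : M3) (d : Fin 3 → ℝ) :
    Integrable (fun R => (Aᵀ * R).trace * W d R) μ := integrable_tw hsupp A d

/-- The fundamental pair inequality for the (0,1) pair. -/
lemma pair01 (hsupp : μ SO3ᶜ = 0)
    (hleft : ∀ Q ∈ SO3, μ.map (fun R => Q * R) = μ)
    (hright : ∀ Q ∈ SO3, μ.map (fun R => R * Q) = μ)
    (a b c : ℝ) (hab : 0 ≤ a + b) :
    0 ≤ ∫ R, (R 0 0 + R 1 1) * W ![a,b,c] R ∂μ := by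
  set n := ∫ R, (R 0 0 + R 1 1) * W ![a,b,c] R ∂μ with hn
  have hP : PP01 ∈ SO3 := PP01_mem
  have hPt : PP01ᵀ ∈ SO3 := so3_transpose PP01_mem
  have hD : DD3 ∈ SO3 := DD3_mem
  have hDP : DD3 * PP01 ∈ SO3 := so3_mul DD3_mem PP01_mem
  have cont1 : Continuous fun R : M3 => (R 0 0 + R 1 1) * W ![a,b,c] R :=
    ((cont_entry 0 0).add (cont_entry 1 1)).mul (cont_W _)
  have h1 : n = ∫ R, (R 0 0 + R 1 1) * W ![b,a,c] R ∂μ := by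
    rw [hn, integral_conj hleft hright hP hPt cont1]
    refine integral_congr_ae (Filter.Eventually.of_forall fun R => ?_)
    show ((PP01 * R * PP01ᵀ) 0 0 + (PP01 * R * PP01ᵀ) 1 1) * W ![a,b,c] (PP01 * R * PP01ᵀ) = _
    simp only [W]
    rw [diag_trace, diag_trace]
    have e00 : (PP01 * R * PP01ᵀ) 0 0 = R 1 1 := by
      simp [PP01, Matrix.mul_apply, Matrix.transpose_apply, Fin.sum_univ_three,
        Matrix.vecHead, Matrix.vecTail, Matrix.vecMul, dotProduct]
    have e11 : (PP01 * R * PP01ᵀ) 1 1 = R 0 0 := by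
      simp [PP01, Matrix.mul_apply, Matrix.transpose_apply, Fin.sum_univ_three,
        Matrix.vecHead, Matrix.vecTail, Matrix.vecMul, dotProduct]
    have e22 : (PP01 * R * PP01ᵀ) 2 2 = R 2 2 := by
      simp [PP01, Matrix.mul_apply, Matrix.transpose_apply, Fin.sum_univ_three,
        Matrix.vecHead, Matrix.vecTail, Matrix.vecMul, dotProduct]
    rw [e00, e11, e22]
    norm_num [Matrix.cons_val_two]
    ring_nf
  have h2 : n = -∫ R, (R 0 0 + R 1 1) * W ![-a,-b,c] R ∂μ := by
    rw [hn, integral_conj hleft hright hD so3_one cont1, ← MeasureTheory.integral_neg]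
    refine integral_congr_ae (Filter.Eventually.of_forall fun R => ?_)
    show ((DD3 * R * 1) 0 0 + (DD3 * R * 1) 1 1) * W ![a,b,c] (DD3 * R * 1) = _
    rw [Matrix.mul_one]
    simp only [W]
    rw [diag_trace, diag_trace]
    have e00 : (DD3 * R) 0 0 = -R 0 0 := by simp [DD3, Matrix.diagonal_mul]
    have e11 : (DD3 * R) 1 1 = -R 1 1 := by simp [DD3, Matrix.diagonal_mul]
    have e22 : (DD3 * R) 2 2 = R 2 2 := by simp [DD3, Matrix.diagonal_mul]
    rw [e00, e11, e22]
    norm_num [Matrix.cons_val_two]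
    ring_nf
  have h3 : n = -∫ R, (R 0 0 + R 1 1) * W ![-b,-a,c] R ∂μ := by
    rw [hn, integral_conj hleft hright hDP hPt cont1, ← MeasureTheory.integral_neg]
    refine integral_congr_ae (Filter.Eventually.of_forall fun R => ?_)
    show ((DD3 * PP01 * R * PP01ᵀ) 0 0 + (DD3 * PP01 * R * PP01ᵀ) 1 1) *
        W ![a,b,c] (DD3 * PP01 * R * PP01ᵀ) = _
    simp only [W]
    rw [diag_trace, diag_trace]
    have e00 : (DD3 * PP01 * R * PP01ᵀ) 0 0 = -R 1 1 := by
      simp [DD3, PP01, Matrix.mul_apply, Matrix.transpose_apply, Fin.sum_univ_three,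
        Matrix.vecHead, Matrix.vecTail, Matrix.vecMul, dotProduct, Matrix.diagonal]
    have e11 : (DD3 * PP01 * R * PP01ᵀ) 1 1 = -R 0 0 := by
      simp [DD3, PP01, Matrix.mul_apply, Matrix.transpose_apply, Fin.sum_univ_three,
        Matrix.vecHead, Matrix.vecTail, Matrix.vecMul, dotProduct, Matrix.diagonal]
    have e22 : (DD3 * PP01 * R * PP01ᵀ) 2 2 = R 2 2 := by
      simp [DD3, PP01, Matrix.mul_apply, Matrix.transpose_apply, Fin.sum_univ_three,
        Matrix.vecHead, Matrix.vecTail, Matrix.vecMul, dotProduct, Matrix.diagonal]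
    rw [e00, e11, e22]
    norm_num [Matrix.cons_val_two]
    ring_nf
  have i1 : Integrable (fun R => (R 0 0 + R 1 1) * W ![a,b,c] R) μ := integrable_pw hsupp 0 1 _
  have i2 : Integrable (fun R => (R 0 0 + R 1 1) * W ![b,a,c] R) μ := integrable_pw hsupp 0 1 _
  have i3 : Integrable (fun R => (R 0 0 + R 1 1) * W ![-a,-b,c] R) μ := integrable_pw hsupp 0 1 _
  have i4 : Integrable (fun R => (R 0 0 + R 1 1) * W ![-b,-a,c] R) μ := integrable_pw hsupp 0 1 _
  have i12 : Integrable (fun R => (R 0 0 + R 1 1) * W ![a,b,c] R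
      + (R 0 0 + R 1 1) * W ![b,a,c] R) μ := i1.add i2
  have i123 : Integrable (fun R => (R 0 0 + R 1 1) * W ![a,b,c] R
      + (R 0 0 + R 1 1) * W ![b,a,c] R - (R 0 0 + R 1 1) * W ![-a,-b,c] R) μ := i12.sub i3
  have hsum : (4:ℝ) * n = ∫ R, ((R 0 0 + R 1 1) * W ![a,b,c] R + (R 0 0 + R 1 1) * W ![b,a,c] R
      - (R 0 0 + R 1 1) * W ![-a,-b,c] R - (R 0 0 + R 1 1) * W ![-b,-a,c] R) ∂μ := by
    rw [MeasureTheory.integral_sub i123 i4, MeasureTheory.integral_sub i12 i3,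
      MeasureTheory.integral_add i1 i2]
    linarith [h1, h2, h3]
  have hnn : 0 ≤ (4:ℝ) * n := by
    rw [hsum]
    refine integral_nonneg fun R => ?_
    simp only [W, diag_trace]
    have := scalar_pair a b c (R 0 0) (R 1 1) (R 2 2) hab
    norm_num [Matrix.cons_val_two] at this ⊢
    convert this using 2 <;> ring_nf
  linarith

/-- The fundamental pair inequality for the (I,J) pair. -/
lemma pair02 (hsupp : μ SO3ᶜ = 0)
    (hleft : ∀ Q ∈ SO3, μ.map (fun R => Q * R) = μ)
    (hright : ∀ Q ∈ SO3, μ.map (fun R => R * Q) = μ)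
    (a b c : ℝ) (hcond : 0 ≤ a + c) :
    0 ≤ ∫ R, (R 0 0 + R 2 2) * W ![a,b,c] R ∂μ := by
  set n := ∫ R, (R 0 0 + R 2 2) * W ![a,b,c] R ∂μ with hn
  have hP : PP02 ∈ SO3 := PP02_mem
  have hPt : PP02ᵀ ∈ SO3 := so3_transpose PP02_mem
  have hD : DD2 ∈ SO3 := DD2_mem
  have hDP : DD2 * PP02 ∈ SO3 := so3_mul DD2_mem PP02_mem
  have cont1 : Continuous fun R : M3 => (R 0 0 + R 2 2) * W ![a,b,c] R :=
    ((cont_entry 0 0).add (cont_entry 2 2)).mul (cont_W _)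
  have h1 : n = ∫ R, (R 0 0 + R 2 2) * W ![c,b,a] R ∂μ := by
    rw [hn, integral_conj hleft hright hP hPt cont1]
    refine integral_congr_ae (Filter.Eventually.of_forall fun R => ?_)
    simp only [W]
    rw [diag_trace, diag_trace]
    simp [PP02, Matrix.mul_apply, Matrix.transpose_apply, Fin.sum_univ_three,
      Matrix.vecHead, Matrix.vecTail, Matrix.vecMul, dotProduct]
    ring_nf
  have h2 : n = -∫ R, (R 0 0 + R 2 2) * W ![-a,b,-c] R ∂μ := by
    rw [hn, integral_conj hleft hright hD so3_one cont1, ← MeasureTheory.integral_neg]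
    refine integral_congr_ae (Filter.Eventually.of_forall fun R => ?_)
    simp only [W]
    rw [diag_trace, diag_trace]
    simp [DD2, Matrix.mul_one, Matrix.diagonal_mul, Matrix.mul_apply, Matrix.transpose_apply,
      Fin.sum_univ_three, Matrix.vecHead, Matrix.vecTail, Matrix.vecMul, dotProduct,
      Matrix.diagonal]
    ring_nf
  have h3 : n = -∫ R, (R 0 0 + R 2 2) * W ![-c,b,-a] R ∂μ := by
    rw [hn, integral_conj hleft hright hDP hPt cont1, ← MeasureTheory.integral_neg]
    refine integral_congr_ae (Filter.Eventually.of_forall fun R => ?_)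
    simp only [W]
    rw [diag_trace, diag_trace]
    simp [DD2, PP02, Matrix.diagonal_mul, Matrix.mul_apply, Matrix.transpose_apply,
      Fin.sum_univ_three, Matrix.vecHead, Matrix.vecTail, Matrix.vecMul, dotProduct,
      Matrix.diagonal]
    ring_nf
  have i1 : Integrable (fun R => (R 0 0 + R 2 2) * W ![a,b,c] R) μ := integrable_pw hsupp 0 2 _
  have i2 : Integrable (fun R => (R 0 0 + R 2 2) * W ![c,b,a] R) μ := integrable_pw hsupp 0 2 _
  have i3 : Integrable (fun R => (R 0 0 + R 2 2) * W ![-a,b,-c] R) μ := integrable_pw hsupp 0 2 _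
  have i4 : Integrable (fun R => (R 0 0 + R 2 2) * W ![-c,b,-a] R) μ := integrable_pw hsupp 0 2 _
  have i12 : Integrable (fun R => (R 0 0 + R 2 2) * W ![a,b,c] R
      + (R 0 0 + R 2 2) * W ![c,b,a] R) μ := i1.add i2
  have i123 : Integrable (fun R => (R 0 0 + R 2 2) * W ![a,b,c] R
      + (R 0 0 + R 2 2) * W ![c,b,a] R - (R 0 0 + R 2 2) * W ![-a,b,-c] R) μ := i12.sub i3
  have hsum : (4:ℝ) * n = ∫ R, ((R 0 0 + R 2 2) * W ![a,b,c] R + (R 0 0 + R 2 2) * W ![c,b,a] R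
      - (R 0 0 + R 2 2) * W ![-a,b,-c] R - (R 0 0 + R 2 2) * W ![-c,b,-a] R) ∂μ := by
    rw [MeasureTheory.integral_sub i123 i4, MeasureTheory.integral_sub i12 i3,
      MeasureTheory.integral_add i1 i2]
    linarith [h1, h2, h3]
  have hnn : 0 ≤ (4:ℝ) * n := by
    rw [hsum]
    refine integral_nonneg fun R => ?_
    simp only [W, diag_trace]
    have := scalar_pair a c b (R 0 0) (R 2 2) (R 1 1) hcond
    norm_num [Matrix.cons_val_two] at this ⊢
    ring_nf at this ⊢
    linarith [this]
  linarith

/-- The fundamental pair inequality for the (I,J) pair. -/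
lemma pair12 (hsupp : μ SO3ᶜ = 0)
    (hleft : ∀ Q ∈ SO3, μ.map (fun R => Q * R) = μ)
    (hright : ∀ Q ∈ SO3, μ.map (fun R => R * Q) = μ)
    (a b c : ℝ) (hcond : 0 ≤ b + c) :
    0 ≤ ∫ R, (R 1 1 + R 2 2) * W ![a,b,c] R ∂μ := by
  set n := ∫ R, (R 1 1 + R 2 2) * W ![a,b,c] R ∂μ with hn
  have hP : PP12 ∈ SO3 := PP12_mem
  have hPt : PP12ᵀ ∈ SO3 := so3_transpose PP12_mem
  have hD : DD1 ∈ SO3 := DD1_mem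
  have hDP : DD1 * PP12 ∈ SO3 := so3_mul DD1_mem PP12_mem
  have cont1 : Continuous fun R : M3 => (R 1 1 + R 2 2) * W ![a,b,c] R :=
    ((cont_entry 1 1).add (cont_entry 2 2)).mul (cont_W _)
  have h1 : n = ∫ R, (R 1 1 + R 2 2) * W ![a,c,b] R ∂μ := by
    rw [hn, integral_conj hleft hright hP hPt cont1]
    refine integral_congr_ae (Filter.Eventually.of_forall fun R => ?_)
    simp only [W]
    rw [diag_trace, diag_trace]
    simp [PP12, Matrix.mul_apply, Matrix.transpose_apply, Fin.sum_univ_three,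
      Matrix.vecHead, Matrix.vecTail, Matrix.vecMul, dotProduct]
    ring_nf
  have h2 : n = -∫ R, (R 1 1 + R 2 2) * W ![a,-b,-c] R ∂μ := by
    rw [hn, integral_conj hleft hright hD so3_one cont1, ← MeasureTheory.integral_neg]
    refine integral_congr_ae (Filter.Eventually.of_forall fun R => ?_)
    simp only [W]
    rw [diag_trace, diag_trace]
    simp [DD1, Matrix.mul_one, Matrix.diagonal_mul, Matrix.mul_apply, Matrix.transpose_apply,
      Fin.sum_univ_three, Matrix.vecHead, Matrix.vecTail, Matrix.vecMul, dotProduct,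
      Matrix.diagonal]
    ring_nf
  have h3 : n = -∫ R, (R 1 1 + R 2 2) * W ![a,-c,-b] R ∂μ := by
    rw [hn, integral_conj hleft hright hDP hPt cont1, ← MeasureTheory.integral_neg]
    refine integral_congr_ae (Filter.Eventually.of_forall fun R => ?_)
    simp only [W]
    rw [diag_trace, diag_trace]
    simp [DD1, PP12, Matrix.diagonal_mul, Matrix.mul_apply, Matrix.transpose_apply,
      Fin.sum_univ_three, Matrix.vecHead, Matrix.vecTail, Matrix.vecMul, dotProduct,
      Matrix.diagonal]
    ring_nf
  have i1 : Integrable (fun R => (R 1 1 + R 2 2) * W ![a,b,c] R) μ := integrable_pw hsupp 1 2 _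
  have i2 : Integrable (fun R => (R 1 1 + R 2 2) * W ![a,c,b] R) μ := integrable_pw hsupp 1 2 _
  have i3 : Integrable (fun R => (R 1 1 + R 2 2) * W ![a,-b,-c] R) μ := integrable_pw hsupp 1 2 _
  have i4 : Integrable (fun R => (R 1 1 + R 2 2) * W ![a,-c,-b] R) μ := integrable_pw hsupp 1 2 _
  have i12 : Integrable (fun R => (R 1 1 + R 2 2) * W ![a,b,c] R
      + (R 1 1 + R 2 2) * W ![a,c,b] R) μ := i1.add i2
  have i123 : Integrable (fun R => (R 1 1 + R 2 2) * W ![a,b,c] R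
      + (R 1 1 + R 2 2) * W ![a,c,b] R - (R 1 1 + R 2 2) * W ![a,-b,-c] R) μ := i12.sub i3
  have hsum : (4:ℝ) * n = ∫ R, ((R 1 1 + R 2 2) * W ![a,b,c] R + (R 1 1 + R 2 2) * W ![a,c,b] R
      - (R 1 1 + R 2 2) * W ![a,-b,-c] R - (R 1 1 + R 2 2) * W ![a,-c,-b] R) ∂μ := by
    rw [MeasureTheory.integral_sub i123 i4, MeasureTheory.integral_sub i12 i3,
      MeasureTheory.integral_add i1 i2]
    linarith [h1, h2, h3]
  have hnn : 0 ≤ (4:ℝ) * n := by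
    rw [hsum]
    refine integral_nonneg fun R => ?_
    simp only [W, diag_trace]
    have := scalar_pair b c a (R 1 1) (R 2 2) (R 0 0) hcond
    norm_num [Matrix.cons_val_two] at this ⊢
    ring_nf at this ⊢
    linarith [this]
  linarith

/-- Averaging over the sign-flip group kills the off-diagonal part. -/
lemma stepA (hsupp : μ SO3ᶜ = 0)
    (hleft : ∀ Q ∈ SO3, μ.map (fun R => Q * R) = μ)
    (hright : ∀ Q ∈ SO3, μ.map (fun R => R * Q) = μ)
    (d : Fin 3 → ℝ) (Q : M3) :
    ∫ R, (Qᵀ * R).trace * W d R ∂μ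
      = ∫ R, (Q 0 0 * R 0 0 + Q 1 1 * R 1 1 + Q 2 2 * R 2 2) * W d R ∂μ := by
  set T := ∫ R, (Qᵀ * R).trace * W d R ∂μ with hT
  have contf : Continuous fun R : M3 => (Qᵀ * R).trace * W d R :=
    ((continuous_const.matrix_mul continuous_id).matrix_trace).mul (cont_W d)
  have claim : ∀ D : M3, D ∈ SO3 → Dᵀ = D →
      (∀ R : M3, ((Qᵀ) * (D * R * D)).trace = (((D * Q * D)ᵀ) * R).trace) →
      (∀ R : M3, W d (D * R * D) = W d R) →
      T = ∫ R, (((D * Q * D)ᵀ) * R).trace * W d R ∂μ := by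
    intro D hD hDt htr hw
    rw [hT, integral_conj hleft hright hD hD contf]
    refine integral_congr_ae (Filter.Eventually.of_forall fun R => ?_)
    show ((Qᵀ) * (D * R * D)).trace * W d (D * R * D) = _
    rw [htr R, hw R]
  have hw1 : ∀ R : M3, W d (DD1 * R * DD1) = W d R := by
    intro R
    simp only [W]
    rw [diag_trace, diag_trace]
    simp [DD1, Matrix.diagonal_mul, Matrix.mul_diagonal]
  have hw2 : ∀ R : M3, W d (DD2 * R * DD2) = W d R := by
    intro R
    simp only [W]
    rw [diag_trace, diag_trace]
    simp [DD2, Matrix.diagonal_mul, Matrix.mul_diagonal]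
  have hw3 : ∀ R : M3, W d (DD3 * R * DD3) = W d R := by
    intro R
    simp only [W]
    rw [diag_trace, diag_trace]
    simp [DD3, Matrix.diagonal_mul, Matrix.mul_diagonal]
  have htr1 : ∀ R : M3, ((Qᵀ) * (DD1 * R * DD1)).trace = (((DD1 * Q * DD1)ᵀ) * R).trace := by
    intro R
    rw [trace_transpose_mul_eq, trace_transpose_mul_eq]
    simp [DD1, Matrix.diagonal_mul, Matrix.mul_diagonal, Fin.sum_univ_three]
    try ring
  have htr2 : ∀ R : M3, ((Qᵀ) * (DD2 * R * DD2)).trace = (((DD2 * Q * DD2)ᵀ) * R).trace := by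
    intro R
    rw [trace_transpose_mul_eq, trace_transpose_mul_eq]
    simp [DD2, Matrix.diagonal_mul, Matrix.mul_diagonal, Fin.sum_univ_three]
    try ring
  have htr3 : ∀ R : M3, ((Qᵀ) * (DD3 * R * DD3)).trace = (((DD3 * Q * DD3)ᵀ) * R).trace := by
    intro R
    rw [trace_transpose_mul_eq, trace_transpose_mul_eq]
    simp [DD3, Matrix.diagonal_mul, Matrix.mul_diagonal, Fin.sum_univ_three]
    try ring
  have hDt1 : DD1ᵀ = DD1 := by rw [DD1, Matrix.diagonal_transpose]
  have hDt2 : DD2ᵀ = DD2 := by rw [DD2, Matrix.diagonal_transpose]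
  have hDt3 : DD3ᵀ = DD3 := by rw [DD3, Matrix.diagonal_transpose]
  have c1 := claim DD1 DD1_mem hDt1 htr1 hw1
  have c2 := claim DD2 DD2_mem hDt2 htr2 hw2
  have c3 := claim DD3 DD3_mem hDt3 htr3 hw3
  have i0 : Integrable (fun R => (Qᵀ * R).trace * W d R) μ := integrable_tw' hsupp Q d
  have i1 : Integrable (fun R => (((DD1 * Q * DD1)ᵀ) * R).trace * W d R) μ :=
    integrable_tw' hsupp _ d
  have i2 : Integrable (fun R => (((DD2 * Q * DD2)ᵀ) * R).trace * W d R) μ :=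
    integrable_tw' hsupp _ d
  have i3 : Integrable (fun R => (((DD3 * Q * DD3)ᵀ) * R).trace * W d R) μ :=
    integrable_tw' hsupp _ d
  have i01 : Integrable (fun R => (Qᵀ * R).trace * W d R
      + (((DD1 * Q * DD1)ᵀ) * R).trace * W d R) μ := i0.add i1
  have i012 : Integrable (fun R => (Qᵀ * R).trace * W d R
      + (((DD1 * Q * DD1)ᵀ) * R).trace * W d R
      + (((DD2 * Q * DD2)ᵀ) * R).trace * W d R) μ := i01.add i2
  have key4 : (4:ℝ) * T = ∫ R, ((Qᵀ * R).trace * W d R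
      + (((DD1 * Q * DD1)ᵀ) * R).trace * W d R
      + (((DD2 * Q * DD2)ᵀ) * R).trace * W d R
      + (((DD3 * Q * DD3)ᵀ) * R).trace * W d R) ∂μ := by
    rw [MeasureTheory.integral_add i012 i3, MeasureTheory.integral_add i01 i2,
      MeasureTheory.integral_add i0 i1]
    linarith [c1, c2, c3]
  have hptw : ∀ R : M3, (Qᵀ * R).trace * W d R
      + (((DD1 * Q * DD1)ᵀ) * R).trace * W d R
      + (((DD2 * Q * DD2)ᵀ) * R).trace * W d R
      + (((DD3 * Q * DD3)ᵀ) * R).trace * W d R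
      = 4 * ((Q 0 0 * R 0 0 + Q 1 1 * R 1 1 + Q 2 2 * R 2 2) * W d R) := by
    intro R
    rw [trace_transpose_mul_eq, trace_transpose_mul_eq, trace_transpose_mul_eq,
      trace_transpose_mul_eq]
    simp [DD1, DD2, DD3, Matrix.diagonal_mul, Matrix.mul_diagonal, Fin.sum_univ_three]
    try ring
  have key4' : (4:ℝ) * T
      = 4 * ∫ R, (Q 0 0 * R 0 0 + Q 1 1 * R 1 1 + Q 2 2 * R 2 2) * W d R ∂μ := by
    rw [key4, ← MeasureTheory.integral_const_mul]
    exact integral_congr_ae (Filter.Eventually.of_forall hptw)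
  linarith

/-- The key inequality. -/
lemma key_ineq (hsupp : μ SO3ᶜ = 0)
    (hleft : ∀ Q ∈ SO3, μ.map (fun R => Q * R) = μ)
    (hright : ∀ Q ∈ SO3, μ.map (fun R => R * Q) = μ)
    (a b c : ℝ) (hab : b ≤ a) (hbc : |c| ≤ b) (Q : M3) (hQ : Q ∈ SO3) :
    0 ≤ ∫ R, ((1 - Q)ᵀ * R).trace * W ![a,b,c] R ∂μ := by
  have hb : 0 ≤ b := (abs_nonneg c).trans hbc
  have hcb : -b ≤ c := neg_le_of_abs_le hbc
  have hsplit : ∫ R, ((1 - Q)ᵀ * R).trace * W ![a,b,c] R ∂μ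
      = (∫ R, ((1:M3)ᵀ * R).trace * W ![a,b,c] R ∂μ)
        - ∫ R, (Qᵀ * R).trace * W ![a,b,c] R ∂μ := by
    rw [← MeasureTheory.integral_sub (integrable_tw' hsupp 1 _) (integrable_tw' hsupp Q _)]
    refine integral_congr_ae (Filter.Eventually.of_forall fun R => ?_)
    show ((1 - Q)ᵀ * R).trace * W ![a,b,c] R = _
    rw [Matrix.transpose_sub, Matrix.sub_mul, Matrix.trace_sub]
    ring
  rw [hsplit, stepA hsupp hleft hright _ Q, stepA hsupp hleft hright _ 1]
  have e1 : ((1:M3) 0 0 : ℝ) = 1 := by simp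
  have e2 : ((1:M3) 1 1 : ℝ) = 1 := by simp
  have e3 : ((1:M3) 2 2 : ℝ) = 1 := by simp
  rw [e1, e2, e3]
  -- m values
  set m0 := ∫ R, R 0 0 * W ![a,b,c] R ∂μ with hm0
  set m1 := ∫ R, R 1 1 * W ![a,b,c] R ∂μ with hm1
  set m2 := ∫ R, R 2 2 * W ![a,b,c] R ∂μ with hm2
  have ia : Integrable (fun R : M3 => R 0 0 * W ![a,b,c] R) μ := integrable_ew hsupp 0 _
  have ib : Integrable (fun R : M3 => R 1 1 * W ![a,b,c] R) μ := integrable_ew hsupp 1 _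
  have ic : Integrable (fun R : M3 => R 2 2 * W ![a,b,c] R) μ := integrable_ew hsupp 2 _
  have ibc : Integrable (fun R : M3 => R 1 1 * W ![a,b,c] R + R 2 2 * W ![a,b,c] R) μ :=
    ib.add ic
  have ja : Integrable (fun R : M3 => Q 0 0 * (R 0 0 * W ![a,b,c] R)) μ := ia.const_mul _
  have jb : Integrable (fun R : M3 => Q 1 1 * (R 1 1 * W ![a,b,c] R)) μ := ib.const_mul _
  have jc : Integrable (fun R : M3 => Q 2 2 * (R 2 2 * W ![a,b,c] R)) μ := ic.const_mul _
  have jbc : Integrable (fun R : M3 => Q 1 1 * (R 1 1 * W ![a,b,c] R)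
      + Q 2 2 * (R 2 2 * W ![a,b,c] R)) μ := jb.add jc
  have htr : (∫ R, ((1:ℝ) * R 0 0 + 1 * R 1 1 + 1 * R 2 2) * W ![a,b,c] R ∂μ)
      = m0 + m1 + m2 := by
    rw [show (fun R : M3 => ((1:ℝ) * R 0 0 + 1 * R 1 1 + 1 * R 2 2) * W ![a,b,c] R)
        = fun R => R 0 0 * W ![a,b,c] R + (R 1 1 * W ![a,b,c] R + R 2 2 * W ![a,b,c] R)
      from funext fun R => by ring]
    rw [MeasureTheory.integral_add ia ibc, MeasureTheory.integral_add ib ic]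
    rw [hm0, hm1, hm2]; ring
  have hq : (∫ R, (Q 0 0 * R 0 0 + Q 1 1 * R 1 1 + Q 2 2 * R 2 2) * W ![a,b,c] R ∂μ)
      = Q 0 0 * m0 + Q 1 1 * m1 + Q 2 2 * m2 := by
    rw [show (fun R : M3 => (Q 0 0 * R 0 0 + Q 1 1 * R 1 1 + Q 2 2 * R 2 2) * W ![a,b,c] R)
        = fun R => Q 0 0 * (R 0 0 * W ![a,b,c] R)
          + (Q 1 1 * (R 1 1 * W ![a,b,c] R) + Q 2 2 * (R 2 2 * W ![a,b,c] R))
      from funext fun R => by ring]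
    rw [MeasureTheory.integral_add ja jbc, MeasureTheory.integral_add jb jc,
      MeasureTheory.integral_const_mul, MeasureTheory.integral_const_mul,
      MeasureTheory.integral_const_mul]
    rw [hm0, hm1, hm2]
    ring
  rw [htr, hq]
  -- pair nonnegativity
  have hp01 : 0 ≤ m0 + m1 := by
    have h := pair01 hsupp hleft hright a b c (by linarith)
    have heq : ∫ R, (R 0 0 + R 1 1) * W ![a,b,c] R ∂μ = m0 + m1 := by
      rw [show (fun R : M3 => (R 0 0 + R 1 1) * W ![a,b,c] R)
          = fun R => R 0 0 * W ![a,b,c] R + R 1 1 * W ![a,b,c] R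
        from funext fun R => by ring]
      rw [MeasureTheory.integral_add ia ib, hm0, hm1]
    rw [heq] at h
    exact h
  have hp02 : 0 ≤ m0 + m2 := by
    have h := pair02 hsupp hleft hright a b c (by linarith)
    have heq : ∫ R, (R 0 0 + R 2 2) * W ![a,b,c] R ∂μ = m0 + m2 := by
      rw [show (fun R : M3 => (R 0 0 + R 2 2) * W ![a,b,c] R)
          = fun R => R 0 0 * W ![a,b,c] R + R 2 2 * W ![a,b,c] R
        from funext fun R => by ring]
      rw [MeasureTheory.integral_add ia ic, hm0, hm2]
    rw [heq] at h
    exact h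
  have hp12 : 0 ≤ m1 + m2 := by
    have h := pair12 hsupp hleft hright a b c (by linarith)
    have heq : ∫ R, (R 1 1 + R 2 2) * W ![a,b,c] R ∂μ = m1 + m2 := by
      rw [show (fun R : M3 => (R 1 1 + R 2 2) * W ![a,b,c] R)
          = fun R => R 1 1 * W ![a,b,c] R + R 2 2 * W ![a,b,c] R
        from funext fun R => by ring]
      rw [MeasureTheory.integral_add ib ic, hm1, hm2]
    rw [heq] at h
    exact h
  -- trace bounds
  have hc01 : 0 ≤ 1 - Q 0 0 - Q 1 1 + Q 2 2 := by
    have h := so3_trace_ge (so3_mul DD3_mem hQ)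
    rw [Matrix.trace_fin_three] at h
    have e : (DD3 * Q) 0 0 = -Q 0 0 ∧ (DD3 * Q) 1 1 = -Q 1 1 ∧ (DD3 * Q) 2 2 = Q 2 2 := by
      refine ⟨?_, ?_, ?_⟩ <;> simp [DD3, Matrix.diagonal_mul]
    rw [e.1, e.2.1, e.2.2] at h
    linarith
  have hc02 : 0 ≤ 1 - Q 0 0 + Q 1 1 - Q 2 2 := by
    have h := so3_trace_ge (so3_mul DD2_mem hQ)
    rw [Matrix.trace_fin_three] at h
    have e : (DD2 * Q) 0 0 = -Q 0 0 ∧ (DD2 * Q) 1 1 = Q 1 1 ∧ (DD2 * Q) 2 2 = -Q 2 2 := by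
      refine ⟨?_, ?_, ?_⟩ <;> simp [DD2, Matrix.diagonal_mul]
    rw [e.1, e.2.1, e.2.2] at h
    linarith
  have hc12 : 0 ≤ 1 + Q 0 0 - Q 1 1 - Q 2 2 := by
    have h := so3_trace_ge (so3_mul DD1_mem hQ)
    rw [Matrix.trace_fin_three] at h
    have e : (DD1 * Q) 0 0 = Q 0 0 ∧ (DD1 * Q) 1 1 = -Q 1 1 ∧ (DD1 * Q) 2 2 = -Q 2 2 := by
      refine ⟨?_, ?_, ?_⟩ <;> simp [DD1, Matrix.diagonal_mul]
    rw [e.1, e.2.1, e.2.2] at h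
    linarith
  nlinarith [mul_nonneg hc01 hp01, mul_nonneg hc02 hp02, mul_nonneg hc12 hp12]

lemma frob_expand {A B : M3} (hA : A ∈ SO3) (hB : B ∈ SO3) :
    frobSq (A - B) = 6 - 2 * ((Aᵀ * B).trace) := by
  show ((A - B)ᵀ * (A - B)).trace = _
  rw [Matrix.transpose_sub, Matrix.sub_mul, Matrix.mul_sub, Matrix.mul_sub,
    Matrix.trace_sub, Matrix.trace_sub, Matrix.trace_sub, hA.1, hB.1]
  have hBA : (Bᵀ * A).trace = (Aᵀ * B).trace := by
    rw [← Matrix.trace_transpose (Aᵀ * B), Matrix.transpose_mul, Matrix.transpose_transpose]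
  rw [hBA, Matrix.trace_one]
  simp
  ring

lemma trace_conj (A U V X : M3) :
    (Aᵀ * (U * X * Vᵀ)).trace = ((Vᵀ * Aᵀ * U) * X).trace := by
  calc (Aᵀ * (U * X * Vᵀ)).trace = ((Aᵀ * U * X) * Vᵀ).trace := by
        rw [← Matrix.mul_assoc, ← Matrix.mul_assoc]
  _ = (Vᵀ * (Aᵀ * U * X)).trace := Matrix.trace_mul_comm _ _
  _ = ((Vᵀ * Aᵀ * U) * X).trace := by rw [← Matrix.mul_assoc, ← Matrix.mul_assoc]

lemma main_thm (μ : Measure M3) [IsProbabilityMeasure μ] (hsupp : μ SO3ᶜ = 0)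
    (hleft : ∀ Q ∈ SO3, μ.map (fun R => Q * R) = μ)
    (hright : ∀ Q ∈ SO3, μ.map (fun R => R * Q) = μ)
    (F U V : M3) (s₁ s₂ s₃ : ℝ)
    (hU : U ∈ SO3) (hV : V ∈ SO3) (h12 : s₁ ≥ s₂) (h23 : s₂ ≥ |s₃|)
    (hF : F = U * Matrix.diagonal ![s₁, s₂, s₃] * Vᵀ) :
    ∀ R ∈ SO3,
      (∫ Rt, frobSq (U * Vᵀ - Rt) * (Real.exp (Fᵀ * Rt).trace / mfC μ F) ∂μ) ≤
        ∫ Rt, frobSq (R - Rt) * (Real.exp (Fᵀ * Rt).trace / mfC μ F) ∂μ := by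
  intro R hR
  have hUV : U * Vᵀ ∈ SO3 := so3_mul hU (so3_transpose hV)
  have hVt : Vᵀ ∈ SO3 := so3_transpose hV
  set e : M3 → ℝ := fun Rt => Real.exp ((Fᵀ * Rt).trace) with he_def
  have contE : Continuous e :=
    Real.continuous_exp.comp ((continuous_const.matrix_mul continuous_id).matrix_trace)
  have hie : Integrable e μ := by
    refine integrable_bdd hsupp contE (C := Real.exp (∑ i, ∑ j, |F i j|)) fun Rt hRt => ?_
    rw [he_def]
    rw [Real.abs_exp]
    exact exp_trace_le F hRt
  have hc : 0 < mfC μ F := by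
    have hmf : mfC μ F = ∫ Rt, e Rt ∂μ := rfl
    rw [hmf, MeasureTheory.integral_pos_iff_support_of_nonneg
      (fun Rt => (Real.exp_pos _).le) hie]
    have hsup : Function.support e = Set.univ :=
      Set.eq_univ_of_forall fun Rt => (Real.exp_pos _).ne'
    rw [hsup, measure_univ]
    norm_num
  -- divide out the constant
  have hdiv : ∀ A : M3, (∫ Rt, frobSq (A - Rt) * (Real.exp (Fᵀ * Rt).trace / mfC μ F) ∂μ)
      = (∫ Rt, frobSq (A - Rt) * e Rt ∂μ) / mfC μ F := by
    intro A
    rw [show (fun Rt => frobSq (A - Rt) * (Real.exp ((Fᵀ * Rt).trace) / mfC μ F))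
        = fun Rt => (frobSq (A - Rt) * e Rt) / mfC μ F from funext fun Rt => by
          rw [he_def]; ring]
    exact MeasureTheory.integral_div _ _
  rw [hdiv, hdiv, div_le_div_iff_of_pos_right hc]
  -- integrability of trace-weighted functions
  have int_tma : ∀ A : M3, Integrable (fun Rt => (Aᵀ * Rt).trace * e Rt) μ := by
    intro A
    refine integrable_bdd hsupp
      (((continuous_const.matrix_mul continuous_id).matrix_trace).mul contE)
      (C := (∑ i, ∑ j, |A i j|) * Real.exp (∑ i, ∑ j, |F i j|)) fun Rt hRt => ?_
    rw [abs_mul, he_def, Real.abs_exp]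
    exact mul_le_mul (trace_abs_le A hRt) (exp_trace_le F hRt) (Real.exp_pos _).le
      (Finset.sum_nonneg fun i _ => Finset.sum_nonneg fun j _ => abs_nonneg _)
  -- expansion of the squared Frobenius distance
  have hexp : ∀ A : M3, A ∈ SO3 → (∫ Rt, frobSq (A - Rt) * e Rt ∂μ)
      = 6 * (∫ Rt, e Rt ∂μ) - 2 * ∫ Rt, (Aᵀ * Rt).trace * e Rt ∂μ := by
    intro A hA
    have h1 : (∫ Rt, frobSq (A - Rt) * e Rt ∂μ)
        = ∫ Rt, (6 * e Rt - 2 * ((Aᵀ * Rt).trace * e Rt)) ∂μ := by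
      refine integral_congr_ae (((ae_so3 hsupp)).mono fun Rt hRt => ?_)
      show frobSq (A - Rt) * e Rt = _
      rw [frob_expand hA hRt]
      ring
    rw [h1, MeasureTheory.integral_sub (hie.const_mul 6) ((int_tma A).const_mul 2),
      MeasureTheory.integral_const_mul, MeasureTheory.integral_const_mul]
  rw [hexp _ hUV, hexp _ hR]
  -- the key difference
  have hQ : Uᵀ * R * V ∈ SO3 := so3_mul (so3_mul (so3_transpose hU) hR) hV
  have hMeq : Vᵀ * (U * Vᵀ - R)ᵀ * U = ((1 : M3) - Uᵀ * R * V)ᵀ := by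
    rw [Matrix.transpose_sub, Matrix.transpose_sub, Matrix.transpose_mul,
      Matrix.transpose_transpose, Matrix.transpose_mul, Matrix.transpose_mul,
      Matrix.transpose_one, Matrix.mul_sub, Matrix.sub_mul]
    congr 1
    · rw [← Matrix.mul_assoc Vᵀ V Uᵀ, hV.1, Matrix.one_mul, hU.1]
    · rw [Matrix.mul_assoc, Matrix.transpose_transpose]
  have hSeq : Vᵀ * Fᵀ * U = Matrix.diagonal ![s₁, s₂, s₃] := by
    rw [hF, Matrix.transpose_mul, Matrix.transpose_mul, Matrix.transpose_transpose,
      Matrix.diagonal_transpose]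
    calc Vᵀ * (V * ((Matrix.diagonal ![s₁, s₂, s₃])ᵀ * Uᵀ)) * U
        = ((Vᵀ * V) * (Matrix.diagonal ![s₁, s₂, s₃])ᵀ) * (Uᵀ * U) := by
          simp only [Matrix.mul_assoc]
    _ = Matrix.diagonal ![s₁, s₂, s₃] := by
          rw [hV.1, hU.1, Matrix.one_mul, Matrix.mul_one, Matrix.diagonal_transpose]
  have contf : Continuous fun Rt : M3 => (((U * Vᵀ - R)ᵀ) * Rt).trace * e Rt :=
    ((continuous_const.matrix_mul continuous_id).matrix_trace).mul contE
  have hkey : 0 ≤ ∫ Rt, (((U * Vᵀ - R)ᵀ) * Rt).trace * e Rt ∂μ := by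
    rw [integral_conj hleft hright hU hVt contf]
    have hptw : ∀ X : M3, (((U * Vᵀ - R)ᵀ) * (U * X * Vᵀ)).trace * e (U * X * Vᵀ)
        = (((1 - Uᵀ * R * V)ᵀ) * X).trace * W ![s₁, s₂, s₃] X := by
      intro X
      rw [he_def]
      simp only [W]
      rw [trace_conj, hMeq, trace_conj (A := F), hSeq]
    rw [show (fun X : M3 => (((U * Vᵀ - R)ᵀ) * (U * X * Vᵀ)).trace * e (U * X * Vᵀ))
        = fun X => (((1 - Uᵀ * R * V)ᵀ) * X).trace * W ![s₁, s₂, s₃] X from funext hptw]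
    exact key_ineq hsupp hleft hright s₁ s₂ s₃ h12 h23 _ hQ
  have hsub : (∫ Rt, (((U * Vᵀ - R)ᵀ) * Rt).trace * e Rt ∂μ)
      = (∫ Rt, (((U * Vᵀ)ᵀ) * Rt).trace * e Rt ∂μ) - ∫ Rt, ((Rᵀ) * Rt).trace * e Rt ∂μ := by
    rw [← MeasureTheory.integral_sub (int_tma _) (int_tma _)]
    refine integral_congr_ae (Filter.Eventually.of_forall fun Rt => ?_)
    show (((U * Vᵀ - R)ᵀ) * Rt).trace * e Rt = _
    rw [Matrix.transpose_sub, Matrix.sub_mul, Matrix.trace_sub]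
    ring
  rw [hsub] at hkey
  linarith

end Key

end MFAux

/-- Let `F = U S Vᵀ` be a proper singular value decomposition
(`U, V ∈ SO(3)`, `S = diag[s₁,s₂,s₃]`, `s₁ ≥ s₂ ≥ |s₃| ≥ 0`), and let
`p(R̃) = exp(tr(FᵀR̃))/c(F)` be the matrix Fisher density on SO(3).  Then the
minimum mean square error mean attitude is `U Vᵀ`: for every `R ∈ SO(3)`,
`∫ ‖UVᵀ − R̃‖_F² p(R̃) dR̃ ≤ ∫ ‖R − R̃‖_F² p(R̃) dR̃`. -/
theorem matrixFisher_mmse_mean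
    (μ : Measure M3) [IsProbabilityMeasure μ] (hsupp : μ SO3ᶜ = 0)
    (hleft : ∀ Q ∈ SO3, μ.map (fun R => Q * R) = μ)
    (hright : ∀ Q ∈ SO3, μ.map (fun R => R * Q) = μ)
    (F U V : M3) (s₁ s₂ s₃ : ℝ)
    (hU : U ∈ SO3) (hV : V ∈ SO3) (h12 : s₁ ≥ s₂) (h23 : s₂ ≥ |s₃|)
    (hF : F = U * Matrix.diagonal ![s₁, s₂, s₃] * Vᵀ) :
    ∀ R ∈ SO3,
      (∫ Rt, frobSq (U * Vᵀ - Rt) * (Real.exp (Fᵀ * Rt).trace / mfC μ F) ∂μ) ≤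
        ∫ Rt, frobSq (R - Rt) * (Real.exp (Fᵀ * Rt).trace / mfC μ F) ∂μ :=
  MFAux.main_thm μ hsupp hleft hright F U V s₁ s₂ s₃ hU hV h12 h23 hF

end
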